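/- Let p, q : α → ℝ be nonnegative on a finite type α with ∑ p = 1, W > 0 a constant with ∑ x, W*q(x) = 1 and p(x)+W*q(x) > 0 for all x. Then ∑ x, p(x)*log( p(x)/(p(x)+W*q(x)) ) + W*q(x)*log( W*q(x)/(p(x)+W*q(x)) ) ≥ -log 4, with equality if and only if p(x) = W*q(x) for all x. -/

import Mathlib

open Real

lemma key_eq (a b : ℝ) (hs : 0 < a + b) :
    a * Real.log (a / (a + b)) + b * Real.log (b / (a + b)) + (a + b) * Real.log 2
      = (a + b) * (Real.log 2 - Real.binEntropy (a / (a + b))) := by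
  have hs' : a + b ≠ 0 := hs.ne'
  have h1 : 1 - a / (a + b) = b / (a + b) := by field_simp; ring
  rw [Real.binEntropy, h1, Real.log_inv, Real.log_inv]
  field_simp
  ring

lemma key_nonneg (a b : ℝ) (hs : 0 < a + b) :
    0 ≤ a * Real.log (a / (a + b)) + b * Real.log (b / (a + b)) + (a + b) * Real.log 2 := by
  rw [key_eq a b hs]
  exact mul_nonneg hs.le (sub_nonneg.2 Real.binEntropy_le_log_two)

lemma key_eq_zero_iff (a b : ℝ) (hs : 0 < a + b) :
    a * Real.log (a / (a + b)) + b * Real.log (b / (a + b)) + (a + b) * Real.log 2 = 0 ↔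
      a = b := by
  rw [key_eq a b hs, mul_eq_zero]
  constructor
  · rintro (h | h)
    · exact absurd h hs.ne'
    · have := Real.binEntropy_eq_log_two.1 (by linarith)
      field_simp at this
      linarith
  · rintro rfl
    right
    have : a / (a + a) = 2⁻¹ := by
      rw [div_eq_iff hs.ne']; ring
    rw [this, Real.binEntropy_two_inv, sub_self]

theorem stmt_9 {α : Type*} [Fintype α] (p q : α → ℝ) (W : ℝ)
    (hp : ∀ x, 0 ≤ p x) (hq : ∀ x, 0 ≤ q x) (hW : 0 < W)
    (hps : ∑ x, p x = 1) (hWqs : ∑ x, W * q x = 1)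
    (hpq : ∀ x, 0 < p x + W * q x) :
    -Real.log 4 ≤
      ∑ x, (p x * Real.log (p x / (p x + W * q x)) +
            W * q x * Real.log (W * q x / (p x + W * q x))) ∧
    (∑ x, (p x * Real.log (p x / (p x + W * q x)) +
           W * q x * Real.log (W * q x / (p x + W * q x))) = -Real.log 4 ↔
      ∀ x, p x = W * q x) := by
  set F : α → ℝ := fun x => p x * Real.log (p x / (p x + W * q x)) +
      W * q x * Real.log (W * q x / (p x + W * q x)) with hF
  set G : α → ℝ := fun x => F x + (p x + W * q x) * Real.log 2 with hG
  have hlog4 : Real.log 4 = 2 * Real.log 2 := by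
    rw [show (4:ℝ) = 2^2 by norm_num, Real.log_pow]; push_cast; ring
  have hsum : ∑ x, G x = (∑ x, F x) + Real.log 4 := by
    rw [hG]
    rw [Finset.sum_add_distrib, ← Finset.sum_mul, hlog4]
    have h2 : ∑ i : α, (p i + W * q i) = 2 := by
      rw [Finset.sum_add_distrib, hps, hWqs]; norm_num
    rw [h2]
  have hGnn : ∀ x ∈ Finset.univ, 0 ≤ G x := fun x _ => key_nonneg _ _ (hpq x)
  have hGsum_nonneg : 0 ≤ ∑ x, G x := Finset.sum_nonneg hGnn
  constructor
  · linarith [hsum ▸ hGsum_nonneg]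
  · rw [show (∑ x, F x = -Real.log 4) ↔ (∑ x, G x = 0) by constructor <;> intro h <;> linarith]
    rw [Finset.sum_eq_zero_iff_of_nonneg hGnn]
    constructor
    · intro h x
      exact (key_eq_zero_iff _ _ (hpq x)).1 (h x (Finset.mem_univ x))
    · intro h x _
      exact (key_eq_zero_iff _ _ (hpq x)).2 (h x)
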